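/- Let R be a feasible score sequence of length n whose normalized score vector H_R = (h_1,...,h_n), h_i = r_i - (i-1), is a concatenation of symmetric vectors (each block either all zeros or of the form (p, p-1, ..., 1, 0, ..., 0, -1, ..., -p)). Then there is exactly one tournament matrix with score sequence R achieving the minimum number of upsets. -/

import Mathlib

/-- `r` is a feasible score sequence of length `n`: nondecreasing, total sum
`n(n-1)/2`, and satisfying the Landau inequalities. -/
def IsFeasible (n : ℕ) (r : Fin n → ℤ) : Prop :=
  Monotone r ∧ (∑ i, r i) = (n.choose 2 : ℤ) ∧
    ∀ k : ℕ, k ≤ n →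
      (k.choose 2 : ℤ) ≤ ∑ i ∈ Finset.univ.filter (fun i : Fin n => (i : ℕ) < k), r i

/-- `A` is (the adjacency matrix of) a tournament on `n` vertices. -/
def IsTournament {n : ℕ} (A : Fin n → Fin n → ℤ) : Prop :=
  (∀ i, A i i = 0) ∧
    ∀ i j, i ≠ j → (A i j = 1 ∧ A j i = 0) ∨ (A i j = 0 ∧ A j i = 1)

/-- The number of upsets of a tournament: entries `a_{ij} = 1` with `i < j`. -/
def upsets {n : ℕ} (A : Fin n → Fin n → ℤ) : ℕ :=
  (Finset.univ.filter (fun p : Fin n × Fin n => p.1 < p.2 ∧ A p.1 p.2 = 1)).card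

/-- There is exactly one tournament matrix with score sequence `r` attaining the
minimum number of upsets, i.e. `|U_min(R)| = 1`. -/
def UminUnique {n : ℕ} (r : Fin n → ℤ) : Prop :=
  ∃! A : Fin n → Fin n → ℤ,
    IsTournament A ∧ (∀ i, (∑ j, A i j) = r i) ∧
      ∀ B : Fin n → Fin n → ℤ, IsTournament B → (∀ i, (∑ j, B i j) = r i) →
        upsets A ≤ upsets B

/-- The symmetric block `(p, p-1, ..., 1, 0^t, -1, -2, ..., -p)`. -/
def symBlock (p t : ℕ) : List ℤ :=
  ((List.range p).map (fun s => (p : ℤ) - s)) ++ List.replicate t 0 ++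
    (List.range p).map (fun s => -((s : ℤ) + 1))

/-- A symmetric vector: either all zeros, or `(p, ..., 1, 0^t, -1, ..., -p)`
for some positive `p`. -/
def IsSymBlock (B : List ℤ) : Prop :=
  (∃ t, B = List.replicate t 0) ∨ ∃ p t, 0 < p ∧ B = symBlock p t

/-- `H` is a concatenation of symmetric vectors. -/
def IsConcatSym (H : List ℤ) : Prop :=
  ∃ L : List (List ℤ), H = L.flatten ∧ ∀ B ∈ L, IsSymBlock B

/-- The normalized score vector `h_i = r_i - (i-1)` of `r`, as a list. -/
def normalized (n : ℕ) (r : Fin n → ℤ) : List ℤ :=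
  List.ofFn (fun i : Fin n => r i - (i : ℕ))

namespace Umin

def tri : ℕ → ℕ
  | 0 => 0
  | k+1 => tri k + (k+1)

lemma tri_succ (k : ℕ) : tri (k+1) = tri k + (k+1) := rfl

lemma tri_sub_one (k : ℕ) : tri k = tri (k-1) + k := by
  cases k <;> simp [tri]

lemma tri_add (x y : ℕ) : tri (x+y) = tri x + tri y + x*y := by
  induction y with
  | zero => simp [tri]
  | succ y ih =>
    have : x + (y+1) = (x+y) + 1 := by omega
    rw [this, tri_succ, ih, tri_succ]
    ring

lemma tri_mono {a b : ℕ} (h : a ≤ b) : tri a ≤ tri b := by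
  obtain ⟨c, rfl⟩ := Nat.exists_eq_add_of_le h
  rw [tri_add]; omega

def symVal (p t l : ℕ) : ℤ :=
  if l < p then (p:ℤ) - l else if l < p + t then 0 else (p:ℤ) + t - l - 1

def blen (q : ℕ × ℕ) : ℕ := 2*q.1 + q.2

def off (P : List (ℕ×ℕ)) : ℕ → ℕ
  | 0 => 0
  | b+1 => off P b + blen (P.getD b (0,0))

lemma off_succ (P : List (ℕ×ℕ)) (b : ℕ) :
    off P (b+1) = off P b + blen (P.getD b (0,0)) := rfl

lemma off_mono (P : List (ℕ×ℕ)) {b b' : ℕ} (h : b ≤ b') : off P b ≤ off P b' := by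
  induction b' with
  | zero => simp [Nat.le_zero.mp h]
  | succ b' ih =>
    rcases Nat.lt_or_ge b (b'+1) with h'|h'
    · exact le_trans (ih (by omega)) (by simp [off_succ])
    · have : b = b' + 1 := by omega
      simp [this]

lemma off_cons (q : ℕ×ℕ) (P : List (ℕ×ℕ)) (b : ℕ) :
    off (q :: P) (b+1) = blen q + off P b := by
  induction b with
  | zero => simp [off]
  | succ b ih =>
    rw [off_succ, ih, off_succ]
    have h2 : (q :: P).getD (b+1) (0,0) = P.getD b (0,0) := rfl
    rw [h2]; ring

lemma list_coe_eq (l : List ℕ) :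
    (do let a ← l; pure ((a:ℤ)) : List ℤ) = l.map (fun a : ℕ => (a:ℤ)) := by
  induction l with
  | nil => rfl
  | cons a l ih =>
    simp only [List.bind_eq_flatMap, List.flatMap_cons, List.map_cons] at *
    rw [ih]
    rfl

lemma symBlock_eq (p t : ℕ) : symBlock p t =
    ((List.range p).map (fun s : ℕ => (p : ℤ) - s)) ++ List.replicate t 0 ++
    (List.range p).map (fun s : ℕ => -((s : ℤ) + 1)) := by
  unfold symBlock
  rw [list_coe_eq, List.map_map, List.map_map]
  rfl

lemma symBlock_length (p t : ℕ) : (symBlock p t).length = 2*p + t := by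
  rw [symBlock_eq]
  simp only [List.length_append, List.length_map, List.length_range, List.length_replicate]
  omega

lemma off_length (P : List (ℕ×ℕ)) :
    off P P.length = ((P.map fun q => symBlock q.1 q.2).flatten).length := by
  induction P with
  | nil => simp [off]
  | cons q P ih =>
    simp only [List.length_cons, off_cons, List.map_cons, List.flatten_cons,
      List.length_append, ih, symBlock_length]
    try simp only [blen]
    try omega

lemma symBlock_get? (p t l : ℕ) (hl : l < 2*p + t) :
    (symBlock p t)[l]? = some (symVal p t l) := by
  rw [symBlock_eq]
  rcases Nat.lt_or_ge l p with h1 | h1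
  · rw [List.getElem?_append_left (by simp only [List.length_append, List.length_map, List.length_range, List.length_replicate]; omega),
      List.getElem?_append_left (by simp only [List.length_append, List.length_map, List.length_range, List.length_replicate]; omega)]
    simp [List.getElem?_map, List.getElem?_range, h1, symVal]
  · rcases Nat.lt_or_ge l (p + t) with h2 | h2
    · rw [List.getElem?_append_left (by simp only [List.length_append, List.length_map, List.length_range, List.length_replicate]; omega),
        List.getElem?_append_right (by simp only [List.length_append, List.length_map, List.length_range, List.length_replicate]; omega)]
      rw [List.getElem?_replicate]
      simp only [List.length_map, List.length_range]
      rw [if_pos (by omega)]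
      simp [symVal, Nat.not_lt.mpr h1, h2]
    · rw [List.getElem?_append_right (by simp only [List.length_append, List.length_map, List.length_range, List.length_replicate]; omega)]
      simp only [List.length_append, List.length_map, List.length_range,
        List.length_replicate]
      rw [List.getElem?_map, List.getElem?_range (by omega)]
      simp only [Option.map_some, Option.some.injEq, symVal,
        Nat.not_lt.mpr h1, Nat.not_lt.mpr h2, if_false]
      push_cast [Nat.cast_sub (by omega : p + t ≤ l)]
      ring

lemma symBlock_get (p t l : ℕ) (hl : l < 2*p + t)
    (h' : l < (symBlock p t).length) :
    (symBlock p t)[l] = symVal p t l := by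
  have := symBlock_get? p t l hl
  rw [List.getElem?_eq_getElem h'] at this
  exact Option.some.inj this

end Umin

namespace Umin

variable {n : ℕ}

def cut (n : ℕ) (r : Fin n → ℤ) (k : ℕ) : ℤ :=
  ∑ i ∈ Finset.univ.filter (fun i : Fin n => (i:ℕ) < k), (r i - (i:ℕ))

lemma filter_lt_succ (n k : ℕ) (hk : k < n) :
    Finset.univ.filter (fun i : Fin n => (i:ℕ) < k+1)
      = insert ⟨k, hk⟩ (Finset.univ.filter (fun i : Fin n => (i:ℕ) < k)) := by
  ext i
  simp only [Finset.mem_filter, Finset.mem_insert, Finset.mem_univ, true_and, Fin.ext_iff]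
  omega

lemma cut_zero (r : Fin n → ℤ) : cut n r 0 = 0 := by
  simp [cut]

lemma cut_succ (r : Fin n → ℤ) (k : ℕ) (hk : k < n) :
    cut n r (k+1) = cut n r k + (r ⟨k, hk⟩ - k) := by
  rw [cut, filter_lt_succ n k hk, Finset.sum_insert (by simp)]
  simp [cut]
  ring

lemma card_filter_lt (k : ℕ) (hk : k ≤ n) :
    (Finset.univ.filter (fun i : Fin n => (i:ℕ) < k)).card = k := by
  induction k with
  | zero => simp
  | succ k ih =>
    rw [filter_lt_succ n k (by omega), Finset.card_insert_of_notMem (by simp),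
      ih (by omega)]

lemma sum_val_filter_lt (k : ℕ) (hk : k ≤ n) :
    ∑ i ∈ Finset.univ.filter (fun i : Fin n => (i:ℕ) < k), ((i:ℕ) : ℤ) = (tri (k-1) : ℤ) := by
  induction k with
  | zero => simp [tri]
  | succ k ih =>
    rw [filter_lt_succ n k (by omega), Finset.sum_insert (by simp), ih (by omega)]
    have := tri_sub_one k
    push_cast
    omega

lemma sumPairs {B : Fin n → Fin n → ℤ} (hT : IsTournament B) (S : Finset (Fin n)) :
    ∑ i ∈ S, ∑ j ∈ S, B i j = (tri (S.card - 1) : ℤ) := by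
  induction S using Finset.induction_on with
  | empty => simp [tri]
  | insert _ _ ha =>
    rename_i a S ih
    rw [Finset.sum_insert ha]
    have e1 : ∑ j ∈ insert a S, B a j = B a a + ∑ j ∈ S, B a j := Finset.sum_insert ha
    have e2 : ∑ i ∈ S, ∑ j ∈ insert a S, B i j = ∑ i ∈ S, (B i a + ∑ j ∈ S, B i j) :=
      Finset.sum_congr rfl (fun i _ => Finset.sum_insert ha)
    rw [e1, e2, hT.1 a, zero_add, Finset.sum_add_distrib, ih]
    have hone : ∑ j ∈ S, B a j + ∑ i ∈ S, B i a = S.card := by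
      rw [← Finset.sum_add_distrib]
      have : ∀ j ∈ S, B a j + B j a = 1 := by
        intro j hj
        have hne : a ≠ j := fun h => ha (h ▸ hj)
        rcases hT.2 a j hne with ⟨h1, h2⟩ | ⟨h1, h2⟩ <;> rw [h1, h2] <;> ring
      rw [Finset.sum_congr rfl this]
      simp
    have hcard : (insert a S).card = S.card + 1 := Finset.card_insert_of_notMem ha
    rw [hcard]
    have := tri_sub_one S.card
    push_cast
    omega

def crossSet (B : Fin n → Fin n → ℤ) (k : ℕ) : Finset (Fin n × Fin n) :=
  Finset.univ.filter (fun pr : Fin n × Fin n => (pr.1:ℕ) < k ∧ k ≤ (pr.2:ℕ) ∧ B pr.1 pr.2 = 1)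

def upsetSet (B : Fin n → Fin n → ℤ) : Finset (Fin n × Fin n) :=
  Finset.univ.filter (fun p : Fin n × Fin n => p.1 < p.2 ∧ B p.1 p.2 = 1)

lemma cross_card {B : Fin n → Fin n → ℤ} {r : Fin n → ℤ} (hT : IsTournament B)
    (hs : ∀ i, (∑ j, B i j) = r i) (k : ℕ) (hk : k ≤ n) :
    ((crossSet B k).card : ℤ) = cut n r k := by
  classical
  set S := Finset.univ.filter (fun i : Fin n => (i:ℕ) < k) with hS
  set S' := Finset.univ.filter (fun i : Fin n => ¬ (i:ℕ) < k) with hS'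
  have hsplit : ∀ i : Fin n, ∑ j, B i j = ∑ j ∈ S, B i j + ∑ j ∈ S', B i j := by
    intro i
    rw [hS, hS', Finset.sum_filter_add_sum_filter_not]
  have h1 : ∑ i ∈ S, r i = (tri (k-1) : ℤ) + ∑ i ∈ S, ∑ j ∈ S', B i j := by
    calc ∑ i ∈ S, r i = ∑ i ∈ S, ∑ j, B i j := by
          exact Finset.sum_congr rfl (fun i _ => (hs i).symm)
      _ = ∑ i ∈ S, ∑ j ∈ S, B i j + ∑ i ∈ S, ∑ j ∈ S', B i j := by
          rw [← Finset.sum_add_distrib]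
          exact Finset.sum_congr rfl (fun i _ => hsplit i)
      _ = (tri (k-1) : ℤ) + ∑ i ∈ S, ∑ j ∈ S', B i j := by
          rw [sumPairs hT S, hS, card_filter_lt k hk]
  have h2 : ∑ i ∈ S, ∑ j ∈ S', B i j = ((crossSet B k).card : ℤ) := by
    rw [← Finset.sum_product']
    have hcs : crossSet B k = (S ×ˢ S').filter (fun p => B p.1 p.2 = 1) := by
      ext p
      simp only [crossSet, hS, hS', Finset.mem_filter, Finset.mem_univ, true_and,
        Finset.mem_product]
      constructor
      · rintro ⟨a, b, c⟩; exact ⟨⟨a, by omega⟩, c⟩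
      · rintro ⟨⟨a, b⟩, c⟩; exact ⟨a, by omega, c⟩
    rw [← Finset.sum_filter_add_sum_filter_not (S ×ˢ S') (fun p => B p.1 p.2 = 1)]
    have hone : ∑ p ∈ (S ×ˢ S').filter (fun p => B p.1 p.2 = 1), B p.1 p.2
        = ((crossSet B k).card : ℤ) := by
      rw [hcs]
      rw [Finset.sum_congr rfl (fun p hp => (Finset.mem_filter.mp hp).2)]
      simp
    have hzero : ∑ p ∈ (S ×ˢ S').filter (fun p => ¬ B p.1 p.2 = 1), B p.1 p.2 = 0 := by
      refine Finset.sum_eq_zero (fun p hp => ?_)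
      have hmem := Finset.mem_filter.mp hp
      have hp1 := (Finset.mem_product.mp hmem.1).1
      have hp2 := (Finset.mem_product.mp hmem.1).2
      simp only [hS, Finset.mem_filter, Finset.mem_univ, true_and] at hp1
      simp only [hS', Finset.mem_filter, Finset.mem_univ, true_and] at hp2
      have hne : p.1 ≠ p.2 := by
        intro h
        rw [h] at hp1
        exact hp2 hp1
      rcases hT.2 p.1 p.2 hne with ⟨h1, _⟩ | ⟨h1, _⟩
      · exact absurd h1 hmem.2
      · exact h1
    rw [hone, hzero, add_zero]
  have h3 : cut n r k = ∑ i ∈ S, r i - ∑ i ∈ S, ((i:ℕ):ℤ) := by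
    rw [cut, ← Finset.sum_sub_distrib]
  rw [h3, h1, h2, sum_val_filter_lt k hk]
  ring

lemma crossSet_subset_upsetSet (B : Fin n → Fin n → ℤ) (k : ℕ) :
    crossSet B k ⊆ upsetSet B := by
  intro p hp
  simp only [crossSet, upsetSet, Finset.mem_filter, Finset.mem_univ, true_and] at *
  exact ⟨by rw [Fin.lt_def]; omega, hp.2.2⟩

lemma upsets_eq_card (B : Fin n → Fin n → ℤ) : upsets B = (upsetSet B).card := rfl

end Umin

namespace Umin

def pb (P : List (ℕ×ℕ)) (b : ℕ) : ℕ := (P.getD b (0,0)).1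
def tb (P : List (ℕ×ℕ)) (b : ℕ) : ℕ := (P.getD b (0,0)).2

lemma blen_eq (P : List (ℕ×ℕ)) (b : ℕ) :
    blen (P.getD b (0,0)) = 2 * pb P b + tb P b := rfl

lemma off_stable (P : List (ℕ×ℕ)) (b : ℕ) (hb : P.length ≤ b) :
    off P b = off P P.length := by
  induction b with
  | zero =>
    have h0 : P.length = 0 := by omega
    rw [h0]
  | succ b ih =>
    rcases Nat.lt_or_ge b P.length with h | h
    · have : b + 1 = P.length := by omega
      rw [this]
    · rw [off_succ, List.getD_eq_default _ _ (by omega), ih h]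
      rfl

/-- The structural hypothesis extracted from `IsConcatSym`. -/
def HGood (n : ℕ) (r : Fin n → ℤ) (P : List (ℕ×ℕ)) : Prop :=
  off P P.length = n ∧
  ∀ b, b < P.length → ∀ l, l < 2 * pb P b + tb P b →
    ∀ i : Fin n, (i:ℕ) = off P b + l → r i - (i:ℕ) = symVal (pb P b) (tb P b) l

lemma off_le_n {n : ℕ} {r : Fin n → ℤ} {P : List (ℕ×ℕ)} (hG : HGood n r P) (b : ℕ) :
    off P b ≤ n := by
  rcases Nat.lt_or_ge b P.length with h | h
  · exact hG.1 ▸ off_mono P (by omega)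
  · rw [off_stable P b h, hG.1]

lemma flatten_get? (P : List (ℕ×ℕ)) (b l : ℕ) (hb : b < P.length)
    (hl : l < 2 * pb P b + tb P b) :
    ((P.map fun q => symBlock q.1 q.2).flatten)[off P b + l]?
      = some (symVal (pb P b) (tb P b) l) := by
  induction P generalizing b with
  | nil => simp at hb
  | cons q P ih =>
    cases b with
    | zero =>
      have hpb : pb (q::P) 0 = q.1 := rfl
      have htb : tb (q::P) 0 = q.2 := rfl
      rw [hpb, htb] at hl ⊢
      have hoff : off (q::P) 0 = 0 := rfl
      rw [hoff, List.map_cons, List.flatten_cons, Nat.zero_add,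
        List.getElem?_append_left (by rw [symBlock_length]; omega)]
      rw [List.getElem?_eq_getElem (by rw [symBlock_length]; omega)]
      rw [symBlock_get q.1 q.2 l hl]
    | succ b =>
      have hpb : pb (q::P) (b+1) = pb P b := rfl
      have htb : tb (q::P) (b+1) = tb P b := rfl
      rw [hpb, htb] at hl ⊢
      rw [List.map_cons, List.flatten_cons, off_cons,
        List.getElem?_append_right (by rw [symBlock_length]; simp [blen]; omega)]
      have harith : blen q + off P b + l - (symBlock q.1 q.2).length = off P b + l := by
        rw [symBlock_length]; simp only [blen]; omega
      rw [show blen q + off P b + l = blen q + (off P b + l) by omega] at harith ⊢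
      rw [harith]
      exact ih b (by simpa using hb) hl

lemma hGood_of_concat {n : ℕ} {r : Fin n → ℤ} {P : List (ℕ×ℕ)}
    (hP : normalized n r = (P.map fun q => symBlock q.1 q.2).flatten) :
    HGood n r P := by
  have hn : off P P.length = n := by
    rw [off_length, ← hP, normalized, List.length_ofFn]
  refine ⟨hn, ?_⟩
  intro b hb l hl i hi
  have h1 := flatten_get? P b l hb hl
  rw [← hP] at h1
  rw [normalized] at h1
  have h2 : (i:ℕ) < (List.ofFn (fun i : Fin n => r i - (i:ℕ))).length := by
    rw [List.length_ofFn]; exact i.isLt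
  rw [← hi, List.getElem?_eq_getElem h2, List.getElem_ofFn] at h1
  simpa using h1

/-- partial-sum function of a symmetric block -/
def gfun (p t k : ℕ) : ℤ :=
  if k ≤ p then (tri p : ℤ) - tri (p - k)
  else if k ≤ p + t then (tri p : ℤ)
  else (tri p : ℤ) - tri (k - p - t)

lemma gfun_succ (p t k : ℕ) (hk : k < 2*p+t) :
    gfun p t (k+1) = gfun p t k + symVal p t k := by
  rcases Nat.lt_or_ge k p with h1 | h1
  · have g1 : gfun p t k = (tri p : ℤ) - tri (p - k) := by
      unfold gfun; rw [if_pos (by omega)]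
    have g2 : gfun p t (k+1) = (tri p : ℤ) - tri (p - (k+1)) := by
      unfold gfun; rw [if_pos (by omega)]
    have s1 : symVal p t k = (p:ℤ) - k := by unfold symVal; rw [if_pos h1]
    have e1 : tri (p - k) = tri (p - (k+1)) + (p - k) := by
      have h := tri_sub_one (p - k)
      rw [show p - k - 1 = p - (k+1) by omega] at h
      omega
    rw [g1, g2, s1, e1]
    push_cast
    omega
  · rcases Nat.lt_or_ge k (p+t) with h2 | h2
    · have s1 : symVal p t k = 0 := by unfold symVal; rw [if_neg (by omega), if_pos h2]
      have g1 : gfun p t k = (tri p : ℤ) := by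
        unfold gfun
        rcases Nat.eq_or_lt_of_le h1 with h3 | h3
        · rw [if_pos (by omega), show p - k = 0 by omega]
          simp [tri]
        · rw [if_neg (by omega), if_pos (by omega)]
      have g2 : gfun p t (k+1) = (tri p : ℤ) := by
        unfold gfun
        rw [if_neg (by omega), if_pos (by omega : k+1 ≤ p+t)]
      rw [g1, g2, s1]
      ring
    · have s1 : symVal p t k = (p:ℤ) + t - k - 1 := by
        unfold symVal; rw [if_neg (by omega), if_neg (by omega)]
      have g1 : gfun p t k = (tri p : ℤ) - tri (k - p - t) := by
        unfold gfun
        rcases Nat.lt_or_ge p k with h3 | h3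
        · rw [if_neg (by omega)]
          rcases Nat.lt_or_ge (p+t) k with h4 | h4
          · rw [if_neg (by omega)]
          · rw [if_pos (by omega), show k - p - t = 0 by omega]
            simp [tri]
        · rw [if_pos (by omega), show p - k = 0 by omega, show k - p - t = 0 by omega]
      have g2 : gfun p t (k+1) = (tri p : ℤ) - tri (k + 1 - p - t) := by
        unfold gfun; rw [if_neg (by omega), if_neg (by omega)]
      have e1 : tri (k + 1 - p - t) = tri (k - p - t) + (k + 1 - p - t) := by
        rw [show k + 1 - p - t = (k - p - t) + 1 by omega, tri_succ]
      rw [g1, g2, s1, e1]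
      push_cast
      omega

lemma cut_within {n : ℕ} {r : Fin n → ℤ} {P : List (ℕ×ℕ)} (hG : HGood n r P)
    (b : ℕ) (hb : b < P.length) :
    ∀ k, k ≤ 2 * pb P b + tb P b →
      cut n r (off P b + k) = cut n r (off P b) + gfun (pb P b) (tb P b) k := by
  intro k
  induction k with
  | zero =>
    intro _
    simp [gfun, tri]
  | succ k ih =>
    intro hk
    have hk' : k < 2 * pb P b + tb P b := by omega
    have hlt : off P b + k < n := by
      have h1 : off P b + (2 * pb P b + tb P b) = off P (b+1) := by
        rw [off_succ, blen_eq]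
      have := off_le_n hG (b+1)
      omega
    rw [show off P b + (k+1) = (off P b + k) + 1 by omega,
      cut_succ r (off P b + k) hlt, ih (by omega)]
    have hval := hG.2 b hb k hk' ⟨off P b + k, hlt⟩ rfl
    simp only [Fin.val_mk] at hval
    have hgs := gfun_succ (pb P b) (tb P b) k hk'
    omega

end Umin

namespace Umin

variable {n : ℕ} {r : Fin n → ℤ} {P : List (ℕ×ℕ)} {B : Fin n → Fin n → ℤ}

lemma cut_off (hG : HGood n r P) : ∀ b, cut n r (off P b) = 0 := by
  intro b
  induction b with
  | zero => rw [show off P 0 = 0 from rfl, cut_zero]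
  | succ b ih =>
    rcases Nat.lt_or_ge b P.length with hb | hb
    · have h := cut_within hG b hb (2 * pb P b + tb P b) le_rfl
      have hoff : off P (b+1) = off P b + (2 * pb P b + tb P b) := by
        rw [off_succ, blen_eq]
      have hg : gfun (pb P b) (tb P b) (2 * pb P b + tb P b) = 0 := by
        unfold gfun
        split_ifs with h1 h2
        · have hp : pb P b = 0 := by omega
          have ht : tb P b = 0 := by omega
          rw [hp, ht]
          simp [tri]
        · have hp : pb P b = 0 := by omega
          rw [hp]
          simp [tri]
        · rw [show 2 * pb P b + tb P b - pb P b - tb P b = pb P b by omega]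
          ring
      rw [hoff]
      omega
    · have heq : off P (b+1) = off P b := by
        rw [off_succ, List.getD_eq_default _ _ (by omega)]
        rfl
      rw [heq]
      exact ih

lemma cutA (hG : HGood n r P) (b : ℕ) (hb : b < P.length) (a : ℕ) (ha : a ≤ pb P b) :
    cut n r (off P b + a) = (tri (pb P b) : ℤ) - tri (pb P b - a) := by
  have h := cut_within hG b hb a (by omega)
  rw [cut_off hG b] at h
  rw [h, zero_add]
  unfold gfun
  rw [if_pos ha]

lemma cutB (hG : HGood n r P) (b : ℕ) (hb : b < P.length) (e : ℕ) (he : e ≤ pb P b) :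
    cut n r (off P b + (pb P b + tb P b + e)) = (tri (pb P b) : ℤ) - tri e := by
  have h := cut_within hG b hb (pb P b + tb P b + e) (by omega)
  rw [cut_off hG b] at h
  rw [h, zero_add]
  unfold gfun
  split_ifs with h1 h2
  · have ht : tb P b = 0 := by omega
    have he0 : e = 0 := by omega
    rw [he0, show pb P b - (pb P b + tb P b + 0) = 0 by omega]
  · have he0 : e = 0 := by omega
    rw [he0]
    simp [tri]
  · rw [show pb P b + tb P b + e - pb P b - tb P b = e by omega]

lemma off_add_block_le (hG : HGood n r P) (b : ℕ) :
    off P b + 2 * pb P b + tb P b ≤ n := by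
  have h1 : off P (b+1) = off P b + (2 * pb P b + tb P b) := by rw [off_succ, blen_eq]
  have h2 := off_le_n hG (b+1)
  omega

lemma cross_boundary_empty (hG : HGood n r P) (hT : IsTournament B)
    (hs : ∀ i, (∑ j, B i j) = r i) (b : ℕ) :
    crossSet B (off P b) = ∅ := by
  have h := cross_card hT hs (off P b) (off_le_n hG b)
  rw [cut_off hG b] at h
  exact Finset.card_eq_zero.mp (by exact_mod_cast h)

lemma cross_kb_card (hG : HGood n r P) (hT : IsTournament B)
    (hs : ∀ i, (∑ j, B i j) = r i) (b : ℕ) (hb : b < P.length) :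
    (crossSet B (off P b + pb P b)).card = tri (pb P b) := by
  have hle : off P b + pb P b ≤ n := by
    have := off_add_block_le hG b
    omega
  have h := cross_card hT hs (off P b + pb P b) hle
  rw [cutA hG b hb (pb P b) le_rfl, Nat.sub_self] at h
  have : ((crossSet B (off P b + pb P b)).card : ℤ) = (tri (pb P b) : ℤ) := by
    rw [h]
    simp [tri]
  exact_mod_cast this

def Lval (P : List (ℕ×ℕ)) : ℕ := ∑ b ∈ Finset.range P.length, tri (pb P b)

lemma cross_disjoint_of_lt (hG : HGood n r P) (hT : IsTournament B)
    (hs : ∀ i, (∑ j, B i j) = r i) {b b' : ℕ} (hbb : b < b') (hb' : b' ≤ P.length) :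
    Disjoint (crossSet B (off P b + pb P b)) (crossSet B (off P b' + pb P b')) := by
  rw [Finset.disjoint_left]
  intro u hu hu'
  simp only [crossSet, Finset.mem_filter, Finset.mem_univ, true_and] at hu hu'
  have h1 : off P b + pb P b ≤ off P (b+1) := by
    rw [off_succ, blen_eq]; omega
  have h2 : off P (b+1) ≤ off P b' := off_mono P (by omega)
  have hmem : u ∈ crossSet B (off P (b+1)) := by
    simp only [crossSet, Finset.mem_filter, Finset.mem_univ, true_and]
    exact ⟨by omega, by omega, hu.2.2⟩
  rw [cross_boundary_empty hG hT hs (b+1)] at hmem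
  exact absurd hmem (Finset.notMem_empty u)

lemma lower_bound (hG : HGood n r P) (hT : IsTournament B)
    (hs : ∀ i, (∑ j, B i j) = r i) : Lval P ≤ upsets B := by
  classical
  have hdisj : ∀ b ∈ Finset.range P.length, ∀ b' ∈ Finset.range P.length, b ≠ b' →
      Disjoint (crossSet B (off P b + pb P b)) (crossSet B (off P b' + pb P b')) := by
    intro b hb b' hb' hne
    simp only [Finset.mem_range] at hb hb'
    rcases Nat.lt_or_ge b b' with h | h
    · exact cross_disjoint_of_lt hG hT hs h (by omega)
    · exact (cross_disjoint_of_lt hG hT hs (by omega) (by omega)).symm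
  have hcard := Finset.card_biUnion hdisj
  have hsub : (Finset.range P.length).biUnion (fun b => crossSet B (off P b + pb P b))
      ⊆ upsetSet B := by
    intro u hu
    rw [Finset.mem_biUnion] at hu
    obtain ⟨b, _, hu⟩ := hu
    exact crossSet_subset_upsetSet B _ hu
  have h1 : Lval P = ((Finset.range P.length).biUnion
      (fun b => crossSet B (off P b + pb P b))).card := by
    rw [hcard, Lval]
    exact Finset.sum_congr rfl (fun b hb =>
      (cross_kb_card hG hT hs b (Finset.mem_range.mp hb)).symm)
  rw [h1, upsets_eq_card]
  exact Finset.card_le_card hsub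

/-! ### rectangles and the staircase set -/

def rectSet (n lo1 hi1 lo2 hi2 : ℕ) : Finset (Fin n × Fin n) :=
  Finset.univ.filter (fun pr : Fin n × Fin n =>
    lo1 ≤ (pr.1:ℕ) ∧ (pr.1:ℕ) < hi1 ∧ lo2 ≤ (pr.2:ℕ) ∧ (pr.2:ℕ) < hi2)

lemma card_filter_Ico (n lo hi : ℕ) (hhi : hi ≤ n) :
    (Finset.univ.filter (fun j : Fin n => lo ≤ (j:ℕ) ∧ (j:ℕ) < hi)).card = hi - lo := by
  rw [← Nat.card_Ico lo hi]
  refine Finset.card_bij' (fun (j : Fin n) _ => (j:ℕ))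
    (fun x hx => (⟨x, lt_of_lt_of_le (Finset.mem_Ico.mp hx).2 hhi⟩ : Fin n))
    ?_ ?_ ?_ ?_
  · intro a ha
    simp only [Finset.mem_filter, Finset.mem_univ, true_and] at ha
    exact Finset.mem_Ico.mpr ⟨ha.1, ha.2⟩
  · intro x hx
    simp only [Finset.mem_filter, Finset.mem_univ, true_and]
    have := Finset.mem_Ico.mp hx
    exact ⟨this.1, this.2⟩
  · intro a _
    rfl
  · intro x _
    rfl

lemma card_rect (n lo1 hi1 lo2 hi2 : ℕ) (h1 : hi1 ≤ n) (h2 : hi2 ≤ n) :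
    (rectSet n lo1 hi1 lo2 hi2).card = (hi1 - lo1) * (hi2 - lo2) := by
  have heq : rectSet n lo1 hi1 lo2 hi2 =
      (Finset.univ.filter (fun i : Fin n => lo1 ≤ (i:ℕ) ∧ (i:ℕ) < hi1)) ×ˢ
      (Finset.univ.filter (fun j : Fin n => lo2 ≤ (j:ℕ) ∧ (j:ℕ) < hi2)) := by
    ext pr
    simp only [rectSet, Finset.mem_filter, Finset.mem_univ, true_and, Finset.mem_product]
    tauto
  rw [heq, Finset.card_product, card_filter_Ico n lo1 hi1 h1, card_filter_Ico n lo2 hi2 h2]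

def sliceSet (n : ℕ) (P : List (ℕ×ℕ)) (b a : ℕ) : Finset (Fin n × Fin n) :=
  rectSet n (off P b + a) (off P b + a + 1)
    (off P b + a + pb P b + tb P b) (off P b + 2 * pb P b + tb P b)

def stairSet (n : ℕ) (P : List (ℕ×ℕ)) : Finset (Fin n × Fin n) :=
  (Finset.range P.length).biUnion
    (fun b => (Finset.range (pb P b)).biUnion (fun a => sliceSet n P b a))

lemma mem_stair {pr : Fin n × Fin n} :
    pr ∈ stairSet n P ↔ ∃ b < P.length, ∃ a < pb P b,
      (pr.1:ℕ) = off P b + a ∧ off P b + a + pb P b + tb P b ≤ (pr.2:ℕ) ∧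
      (pr.2:ℕ) < off P b + 2 * pb P b + tb P b := by
  simp only [stairSet, Finset.mem_biUnion, Finset.mem_range, sliceSet, rectSet,
    Finset.mem_filter, Finset.mem_univ, true_and]
  constructor
  · rintro ⟨b, hb, a, ha, h1, h2, h3, h4⟩
    exact ⟨b, hb, a, ha, by omega, h3, h4⟩
  · rintro ⟨b, hb, a, ha, h1, h2, h3⟩
    exact ⟨b, hb, a, ha, by omega, by omega, h2, h3⟩

lemma stair_lt {pr : Fin n × Fin n} (h : pr ∈ stairSet n P) : (pr.1:ℕ) < (pr.2:ℕ) := by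
  rw [mem_stair] at h
  obtain ⟨b, hb, a, ha, h1, h2, h3⟩ := h
  omega

lemma sum_succ_id (p : ℕ) : ∑ a ∈ Finset.range p, (a + 1) = tri p := by
  induction p with
  | zero => simp [tri]
  | succ p ih => rw [Finset.sum_range_succ, tri_succ, ih]

lemma sum_pred (p : ℕ) : ∑ a ∈ Finset.range p, (p - a) = tri p := by
  have h1 : ∑ a ∈ Finset.range p, (p - a) = ∑ a ∈ Finset.range p, (a + 1) := by
    rw [← Finset.sum_range_reflect (fun a => a + 1) p]
    refine Finset.sum_congr rfl (fun a ha => ?_)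
    rw [Finset.mem_range] at ha
    omega
  rw [h1, sum_succ_id]

lemma card_slice (hG : HGood n r P) (b a : ℕ) (hb : b < P.length) (ha : a < pb P b) :
    (sliceSet n P b a).card = pb P b - a := by
  have hn := off_add_block_le hG b
  rw [sliceSet, card_rect n _ _ _ _ (by omega) (by omega)]
  have e1 : off P b + a + 1 - (off P b + a) = 1 := by omega
  have e2 : off P b + 2 * pb P b + tb P b - (off P b + a + pb P b + tb P b) = pb P b - a := by
    omega
  rw [e1, e2, one_mul]

lemma card_stair (hG : HGood n r P) : (stairSet n P).card = Lval P := by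
  classical
  rw [stairSet, Finset.card_biUnion, Lval]
  · refine Finset.sum_congr rfl (fun b hb => ?_)
    rw [Finset.mem_range] at hb
    rw [Finset.card_biUnion]
    · rw [Finset.sum_congr rfl (fun a ha => card_slice hG b a hb (Finset.mem_range.mp ha))]
      exact sum_pred (pb P b)
    · intro a ha a' ha' hne
      rw [Function.onFun, Finset.disjoint_left]
      intro u hu hu'
      simp only [sliceSet, rectSet, Finset.mem_filter, Finset.mem_univ, true_and] at hu hu'
      omega
  · intro b hb b' hb' hne
    rw [Finset.mem_coe, Finset.mem_range] at hb hb'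
    rw [Function.onFun, Finset.disjoint_left]
    intro u hu hu'
    simp only [Finset.mem_biUnion, Finset.mem_range, sliceSet, rectSet,
      Finset.mem_filter, Finset.mem_univ, true_and] at hu hu'
    obtain ⟨a, ha, h1, h2, h3, h4⟩ := hu
    obtain ⟨a', ha', h1', h2', h3', h4'⟩ := hu'
    rcases Nat.lt_or_ge b b' with h | h
    · have k1 : off P b + pb P b ≤ off P (b+1) := by rw [off_succ, blen_eq]; omega
      have k2 : off P (b+1) ≤ off P b' := off_mono P (by omega)
      omega
    · have hlt : b' < b := by omega
      have k1 : off P b' + pb P b' ≤ off P (b'+1) := by rw [off_succ, blen_eq]; omega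
      have k2 : off P (b'+1) ≤ off P b := off_mono P (by omega)
      omega

/-! ### the minimizing tournament -/

def A0 (n : ℕ) (P : List (ℕ×ℕ)) : Fin n → Fin n → ℤ := fun i j =>
  if (i, j) ∈ stairSet n P then 1
  else if (j:ℕ) < (i:ℕ) ∧ (j, i) ∉ stairSet n P then 1 else 0

lemma A0_tournament : IsTournament (A0 n P) := by
  constructor
  · intro i
    rw [A0, if_neg (fun h => absurd (stair_lt h) (by simp)),
      if_neg (by simp)]
  · intro i j hne
    have hvne : (i:ℕ) ≠ (j:ℕ) := fun h => hne (Fin.ext h)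
    rcases Nat.lt_or_ge (i:ℕ) (j:ℕ) with h | h
    · have hji : (j, i) ∉ stairSet n P := fun hm => by have := stair_lt hm; simp at this; omega
      by_cases hij : (i, j) ∈ stairSet n P
      · left
        constructor
        · rw [A0, if_pos hij]
        · rw [A0, if_neg hji, if_neg (by push_neg; intro _; exact hij)]
      · right
        constructor
        · rw [A0, if_neg hij, if_neg (by push_neg; intro hc; omega)]
        · rw [A0, if_neg hji, if_pos ⟨h, hij⟩]
    · have h' : (j:ℕ) < (i:ℕ) := by omega
      have hij : (i, j) ∉ stairSet n P := fun hm => by have := stair_lt hm; simp at this; omega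
      by_cases hji : (j, i) ∈ stairSet n P
      · right
        constructor
        · rw [A0, if_neg hij, if_neg (by push_neg; intro _; exact hji)]
        · rw [A0, if_pos hji]
      · left
        constructor
        · rw [A0, if_neg hij, if_pos ⟨h', hji⟩]
        · rw [A0, if_neg hji, if_neg (by push_neg; intro hc; omega)]

lemma A0_upsetSet : upsetSet (A0 n P) = stairSet n P := by
  ext pr
  simp only [upsetSet, Finset.mem_filter, Finset.mem_univ, true_and]
  constructor
  · rintro ⟨hlt, h1⟩
    by_contra hns
    rw [A0, if_neg hns, if_neg (by push_neg; intro hc; rw [Fin.lt_def] at hlt; omega)] at h1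
    exact absurd h1 (by norm_num)
  · intro hs
    refine ⟨by rw [Fin.lt_def]; exact stair_lt hs, ?_⟩
    obtain ⟨i, j⟩ := pr
    rw [A0, if_pos hs]

lemma A0_upsets (hG : HGood n r P) : upsets (A0 n P) = Lval P := by
  rw [upsets_eq_card, A0_upsetSet, card_stair hG]

end Umin

namespace Umin

variable {n : ℕ} {r : Fin n → ℤ} {P : List (ℕ×ℕ)} {B : Fin n → Fin n → ℤ}

lemma exists_block (hG : HGood n r P) (i : Fin n) :
    ∃ b, b < P.length ∧ off P b ≤ (i:ℕ) ∧ (i:ℕ) < off P (b+1) := by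
  have key : ∀ c, (i:ℕ) < off P c → ∃ b, b < c ∧ off P b ≤ (i:ℕ) ∧ (i:ℕ) < off P (b+1) := by
    intro c
    induction c with
    | zero => intro h; simp [off] at h
    | succ c ih =>
      intro h
      rcases Nat.lt_or_ge (i:ℕ) (off P c) with h' | h'
      · obtain ⟨b, hb, h1, h2⟩ := ih h'
        exact ⟨b, by omega, h1, h2⟩
      · exact ⟨c, by omega, h', h⟩
  exact key P.length (by rw [hG.1]; exact i.isLt)

lemma block_unique {b b' x : ℕ} (h1 : off P b ≤ x) (h2 : x < off P (b+1))
    (h1' : off P b' ≤ x) (h2' : x < off P (b'+1)) : b = b' := by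
  by_contra hne
  rcases Nat.lt_or_ge b b' with h | h
  · have := off_mono P (show b + 1 ≤ b' by omega)
    omega
  · have hlt : b' < b := by omega
    have := off_mono P (show b' + 1 ≤ b by omega)
    omega

lemma A0_scores (hG : HGood n r P) : ∀ i, (∑ j, A0 n P i j) = r i := by
  classical
  intro i
  obtain ⟨b, hb, hi1, hi2⟩ := exists_block hG i
  have hoffb : off P (b+1) = off P b + (2 * pb P b + tb P b) := by rw [off_succ, blen_eq]
  have hval : r i - (i:ℕ) = symVal (pb P b) (tb P b) ((i:ℕ) - off P b) :=
    hG.2 b hb ((i:ℕ) - off P b) (by omega) i (by omega)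
  have hsum : (∑ j, A0 n P i j) =
      ((Finset.univ.filter (fun j : Fin n => (i, j) ∈ stairSet n P ∨
        ((j:ℕ) < (i:ℕ) ∧ (j, i) ∉ stairSet n P))).card : ℤ) := by
    rw [← Finset.sum_boole]
    refine Finset.sum_congr rfl (fun j _ => ?_)
    rw [A0]
    by_cases h1 : (i, j) ∈ stairSet n P
    · rw [if_pos h1, if_pos (Or.inl h1)]
    · by_cases h2 : (j:ℕ) < (i:ℕ) ∧ (j, i) ∉ stairSet n P
      · rw [if_neg h1, if_pos h2, if_pos (Or.inr h2)]
      · rw [if_neg h1, if_neg h2, if_neg (by tauto)]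
  rw [hsum, Finset.filter_or, Finset.card_union_of_disjoint (by
    rw [Finset.disjoint_left]
    intro j hj hj'
    simp only [Finset.mem_filter, Finset.mem_univ, true_and] at hj hj'
    have := stair_lt hj
    simp only at this
    omega)]
  have hout : (Finset.univ.filter (fun j : Fin n => (i, j) ∈ stairSet n P)).card
      = (off P b + 2 * pb P b + tb P b) - ((i:ℕ) + pb P b + tb P b) := by
    have hseteq : (Finset.univ.filter (fun j : Fin n => (i, j) ∈ stairSet n P)) =
        Finset.univ.filter (fun j : Fin n =>
          ((i:ℕ) + pb P b + tb P b) ≤ (j:ℕ) ∧ (j:ℕ) < off P b + 2 * pb P b + tb P b) := by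
      ext j
      simp only [Finset.mem_filter, Finset.mem_univ, true_and, mem_stair]
      constructor
      · rintro ⟨b', hb', a', ha', h1, h2, h3⟩
        have hoffb' : off P (b'+1) = off P b' + (2 * pb P b' + tb P b') := by
          rw [off_succ, blen_eq]
        have hbb : b' = b := block_unique (by omega) (by omega) hi1 hi2
        subst hbb
        omega
      · rintro ⟨h1, h2⟩
        exact ⟨b, hb, (i:ℕ) - off P b, by omega, by omega, by omega, by omega⟩
    rw [hseteq, card_filter_Ico n _ _ (by have := off_add_block_le hG b; omega)]
  have hcolset : (Finset.univ.filter (fun j : Fin n => (j, i) ∈ stairSet n P))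
      = Finset.univ.filter (fun j : Fin n =>
          off P b ≤ (j:ℕ) ∧ (j:ℕ) < ((i:ℕ) + 1) - (pb P b + tb P b)) := by
    ext j
    simp only [Finset.mem_filter, Finset.mem_univ, true_and, mem_stair]
    constructor
    · rintro ⟨b', hb', a', ha', h1, h2, h3⟩
      have hoffb' : off P (b'+1) = off P b' + (2 * pb P b' + tb P b') := by
        rw [off_succ, blen_eq]
      have hbb : b' = b := block_unique (by omega) (by omega) hi1 hi2
      subst hbb
      omega
    · rintro ⟨h1, h2⟩
      exact ⟨b, hb, (j:ℕ) - off P b, by omega, by omega, by omega, by omega⟩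
  have hlowsplit : (Finset.univ.filter (fun j : Fin n =>
        (j:ℕ) < (i:ℕ) ∧ (j, i) ∉ stairSet n P))
      = (Finset.univ.filter (fun j : Fin n => (j:ℕ) < (i:ℕ))) \
        (Finset.univ.filter (fun j : Fin n => (j, i) ∈ stairSet n P)) := by
    ext j
    simp only [Finset.mem_filter, Finset.mem_univ, true_and, Finset.mem_sdiff]
  have hcolsub : (Finset.univ.filter (fun j : Fin n => (j, i) ∈ stairSet n P))
      ⊆ (Finset.univ.filter (fun j : Fin n => (j:ℕ) < (i:ℕ))) := by
    intro j hj
    simp only [Finset.mem_filter, Finset.mem_univ, true_and] at hj ⊢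
    have := stair_lt hj
    simpa using this
  rw [hlowsplit, Finset.card_sdiff_of_subset hcolsub, hcolset,
    card_filter_Ico n _ _ (by omega), card_filter_lt (i:ℕ) (by omega), hout]
  unfold symVal at hval
  split_ifs at hval <;> omega

/-! ### equality analysis -/

lemma upset_in_block (hG : HGood n r P) (hT : IsTournament B)
    (hs : ∀ i, (∑ j, B i j) = r i) {u : Fin n × Fin n} {b : ℕ}
    (hu : u ∈ crossSet B (off P b + pb P b)) :
    off P b ≤ (u.1:ℕ) ∧ (u.2:ℕ) < off P (b+1) := by
  simp only [crossSet, Finset.mem_filter, Finset.mem_univ, true_and] at hu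
  have hble : off P b + pb P b ≤ off P (b+1) := by rw [off_succ, blen_eq]; omega
  constructor
  · by_contra h
    push_neg at h
    have hmem : u ∈ crossSet B (off P b) := by
      simp only [crossSet, Finset.mem_filter, Finset.mem_univ, true_and]
      exact ⟨h, by omega, hu.2.2⟩
    rw [cross_boundary_empty hG hT hs b] at hmem
    exact absurd hmem (Finset.notMem_empty u)
  · by_contra h
    push_neg at h
    have hmem : u ∈ crossSet B (off P (b+1)) := by
      simp only [crossSet, Finset.mem_filter, Finset.mem_univ, true_and]
      exact ⟨by omega, h, hu.2.2⟩
    rw [cross_boundary_empty hG hT hs (b+1)] at hmem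
    exact absurd hmem (Finset.notMem_empty u)

lemma eq_analysis (hG : HGood n r P) (hT : IsTournament B)
    (hs : ∀ i, (∑ j, B i j) = r i) (hmin : upsets B = Lval P) :
    B = A0 n P := by
  classical
  set W := (Finset.range P.length).biUnion (fun b => crossSet B (off P b + pb P b)) with hW
  have hdisj : ∀ b ∈ Finset.range P.length, ∀ b' ∈ Finset.range P.length, b ≠ b' →
      Disjoint (crossSet B (off P b + pb P b)) (crossSet B (off P b' + pb P b')) := by
    intro b hb b' hb' hne
    simp only [Finset.mem_range] at hb hb'
    rcases Nat.lt_or_ge b b' with h | h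
    · exact cross_disjoint_of_lt hG hT hs h (by omega)
    · exact (cross_disjoint_of_lt hG hT hs (by omega) (by omega)).symm
  have hWsub : W ⊆ upsetSet B := by
    intro u hu
    rw [hW, Finset.mem_biUnion] at hu
    obtain ⟨b, _, hu⟩ := hu
    exact crossSet_subset_upsetSet B _ hu
  have hWcard : W.card = Lval P := by
    rw [hW, Finset.card_biUnion hdisj, Lval]
    exact Finset.sum_congr rfl (fun b hb =>
      cross_kb_card hG hT hs b (Finset.mem_range.mp hb))
  have hWeq : W = upsetSet B := by
    refine Finset.eq_of_subset_of_card_le hWsub ?_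
    rw [hWcard, ← upsets_eq_card, hmin]
  -- every index pair in the "corner" of block b at level a carries a 1
  have hcorner : ∀ b, b < P.length → ∀ a, 1 ≤ a → a ≤ pb P b →
      ∀ u : Fin n × Fin n, u ∈ rectSet n (off P b) (off P b + a)
        (off P b + (pb P b + tb P b + (a-1))) (off P b + 2 * pb P b + tb P b) →
        B u.1 u.2 = 1 := by
    intro b hb a ha1 ha2
    set X := crossSet B (off P b + a) with hX
    set Y := crossSet B (off P b + (pb P b + tb P b + (a-1))) with hY
    set U := crossSet B (off P b + pb P b) with hU
    have hmemblock : ∀ u ∈ upsetSet B, ∃ b', b' < P.length ∧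
        u ∈ crossSet B (off P b' + pb P b') ∧
        off P b' ≤ (u.1:ℕ) ∧ (u.1:ℕ) < off P b' + pb P b' ∧
        off P b' + pb P b' ≤ (u.2:ℕ) ∧ (u.2:ℕ) < off P (b'+1) := by
      intro u hu
      rw [← hWeq, hW, Finset.mem_biUnion] at hu
      obtain ⟨b', hb', hu⟩ := hu
      rw [Finset.mem_range] at hb'
      have hloc := upset_in_block hG hT hs hu
      simp only [crossSet, Finset.mem_filter, Finset.mem_univ, true_and] at hu
      exact ⟨b', hb', by
        simp only [crossSet, Finset.mem_filter, Finset.mem_univ, true_and]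
        exact hu, hloc.1, hu.1, hu.2.1, hloc.2⟩
    have hXsub : X ⊆ U := by
      intro u hu
      have hup : u ∈ upsetSet B := crossSet_subset_upsetSet B _ hu
      obtain ⟨b', hb', hu', k1, k2, k3, k4⟩ := hmemblock u hup
      simp only [hX, crossSet, Finset.mem_filter, Finset.mem_univ, true_and] at hu
      have hoffb' : off P (b'+1) = off P b' + (2 * pb P b' + tb P b') := by
        rw [off_succ, blen_eq]
      have hbb : b' = b := by
        by_contra hne
        rcases Nat.lt_or_ge b' b with h | h
        · have := off_mono P (show b' + 1 ≤ b by omega)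
          omega
        · have hoffb2 : off P (b+1) = off P b + (2 * pb P b + tb P b) := by
            rw [off_succ, blen_eq]
          have := off_mono P (show b + 1 ≤ b' by omega)
          omega
      rw [hbb] at hu'
      exact hu'
    have hYsub : Y ⊆ U := by
      intro u hu
      have hup : u ∈ upsetSet B := crossSet_subset_upsetSet B _ hu
      obtain ⟨b', hb', hu', k1, k2, k3, k4⟩ := hmemblock u hup
      simp only [hY, crossSet, Finset.mem_filter, Finset.mem_univ, true_and] at hu
      have hoffb' : off P (b'+1) = off P b' + (2 * pb P b' + tb P b') := by
        rw [off_succ, blen_eq]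
      have hbb : b' = b := by
        by_contra hne
        rcases Nat.lt_or_ge b' b with h | h
        · have := off_mono P (show b' + 1 ≤ b by omega)
          omega
        · have hoffb2 : off P (b+1) = off P b + (2 * pb P b + tb P b) := by
            rw [off_succ, blen_eq]
          have := off_mono P (show b + 1 ≤ b' by omega)
          omega
      rw [hbb] at hu'
      exact hu'
    have hXcard : (X.card : ℤ) = (tri (pb P b) : ℤ) - tri (pb P b - a) := by
      rw [hX, cross_card hT hs _ (by have := off_add_block_le hG b; omega),
        cutA hG b hb a ha2]
    have hYcard : (Y.card : ℤ) = (tri (pb P b) : ℤ) - tri (a - 1) := by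
      rw [hY, cross_card hT hs _ (by have := off_add_block_le hG b; omega),
        cutB hG b hb (a-1) (by omega)]
    have hUcard : U.card = tri (pb P b) := cross_kb_card hG hT hs b hb
    have hXYU : X ∪ Y ⊆ U := Finset.union_subset hXsub hYsub
    have hinter : (X ∩ Y).card + (X ∪ Y).card = X.card + Y.card :=
      Finset.card_inter_add_card_union X Y
    have hXYcard : (X ∪ Y).card ≤ tri (pb P b) := hUcard ▸ Finset.card_le_card hXYU
    -- triangular identity
    have htri : tri (pb P b) = tri (a-1) + tri (pb P b - a) + (a-1) * (pb P b - a + 1)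
        + (pb P b - a + 1) := by
      have h1 := tri_add (a-1) (pb P b - a + 1)
      rw [show (a-1) + (pb P b - a + 1) = pb P b by omega] at h1
      have h2 := tri_succ (pb P b - a)
      omega
    have hmul : a * (pb P b - a + 1) = (a-1) * (pb P b - a + 1) + (pb P b - a + 1) := by
      obtain ⟨a', rfl⟩ : ∃ a', a = a' + 1 := ⟨a - 1, by omega⟩
      simp only [Nat.add_sub_cancel]
      ring
    -- the corner rectangle
    set C := rectSet n (off P b) (off P b + a)
      (off P b + (pb P b + tb P b + (a-1))) (off P b + 2 * pb P b + tb P b) with hC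
    have hCcard : C.card = a * (pb P b - a + 1) := by
      rw [hC, card_rect n _ _ _ _ (by have := off_add_block_le hG b; omega)
        (by have := off_add_block_le hG b; omega)]
      rw [show off P b + a - off P b = a by omega,
        show off P b + 2 * pb P b + tb P b - (off P b + (pb P b + tb P b + (a-1)))
          = pb P b - a + 1 by omega]
    have hXYC : X ∩ Y ⊆ C := by
      intro u hu
      rw [Finset.mem_inter] at hu
      have hu1 := hu.1
      have hu2 := hu.2
      have huU : u ∈ U := hXsub hu.1
      have hloc := upset_in_block hG hT hs (hU ▸ huU)
      have hoffb2 : off P (b+1) = off P b + (2 * pb P b + tb P b) := by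
        rw [off_succ, blen_eq]
      simp only [hX, crossSet, Finset.mem_filter, Finset.mem_univ, true_and] at hu1
      simp only [hY, crossSet, Finset.mem_filter, Finset.mem_univ, true_and] at hu2
      simp only [hC, rectSet, Finset.mem_filter, Finset.mem_univ, true_and]
      exact ⟨hloc.1, by omega, by omega, by omega⟩
    have hCX : C = X ∩ Y := by
      refine (Finset.eq_of_subset_of_card_le hXYC ?_).symm
      have : (X ∩ Y).card ≥ a * (pb P b - a + 1) := by omega
      omega
    intro u hu
    have : u ∈ X ∩ Y := hCX ▸ hu
    have := (Finset.mem_inter.mp this).1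
    simp only [hX, crossSet, Finset.mem_filter, Finset.mem_univ, true_and] at this
    exact this.2.2
  -- all staircase entries are 1
  have hstairone : ∀ pr : Fin n × Fin n, pr ∈ stairSet n P → B pr.1 pr.2 = 1 := by
    intro pr hpr
    rw [mem_stair] at hpr
    obtain ⟨b, hb, a', ha', h1, h2, h3⟩ := hpr
    refine hcorner b hb (a'+1) (by omega) (by omega) pr ?_
    simp only [rectSet, Finset.mem_filter, Finset.mem_univ, true_and]
    exact ⟨by omega, by omega, by omega, by omega⟩
  -- stairSet = upsetSet B
  have hstairsub : stairSet n P ⊆ upsetSet B := by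
    intro pr hpr
    simp only [upsetSet, Finset.mem_filter, Finset.mem_univ, true_and]
    exact ⟨by rw [Fin.lt_def]; exact stair_lt hpr, hstairone pr hpr⟩
  have hstaireq : stairSet n P = upsetSet B := by
    refine Finset.eq_of_subset_of_card_le hstairsub ?_
    rw [card_stair hG, ← upsets_eq_card, hmin]
  -- conclude B = A0
  funext i j
  rcases Nat.lt_trichotomy (i:ℕ) (j:ℕ) with h | h | h
  · by_cases hm : (i, j) ∈ stairSet n P
    · rw [show A0 n P i j = 1 by rw [A0, if_pos hm]]
      exact hstairone (i, j) hm
    · have hne : i ≠ j := fun hc => by rw [hc] at h; omega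
      have hnup : (i, j) ∉ upsetSet B := by rw [← hstaireq]; exact hm
      simp only [upsetSet, Finset.mem_filter, Finset.mem_univ, true_and, not_and] at hnup
      have hBij : B i j ≠ 1 := hnup (by rw [Fin.lt_def]; exact h)
      have hB0 : B i j = 0 := by
        rcases hT.2 i j hne with ⟨h1, _⟩ | ⟨h1, _⟩
        · exact absurd h1 hBij
        · exact h1
      rw [hB0, A0, if_neg hm, if_neg (by push_neg; intro hc; omega)]
  · have hij : i = j := Fin.ext h
    rw [hij, hT.1 j, (A0_tournament (n := n) (P := P)).1 j]
  · have hne : i ≠ j := fun hc => by rw [hc] at h; omega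
    have hnij : (i, j) ∉ stairSet n P := fun hm => by
      have := stair_lt hm
      simp only at this
      omega
    by_cases hm : (j, i) ∈ stairSet n P
    · have hBji : B j i = 1 := hstairone (j, i) hm
      have hB0 : B i j = 0 := by
        rcases hT.2 j i (fun hc => hne hc.symm) with ⟨_, h2⟩ | ⟨h1, _⟩
        · exact h2
        · rw [h1] at hBji; exact absurd hBji (by norm_num)
      rw [hB0, A0, if_neg hnij, if_neg (by push_neg; intro _; exact hm)]
    · have hnup : (j, i) ∉ upsetSet B := by rw [← hstaireq]; exact hm
      simp only [upsetSet, Finset.mem_filter, Finset.mem_univ, true_and, not_and] at hnup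
      have hBji : B j i ≠ 1 := hnup (by rw [Fin.lt_def]; exact h)
      have hB1 : B i j = 1 := by
        rcases hT.2 j i (fun hc => hne hc.symm) with ⟨h1, _⟩ | ⟨_, h2⟩
        · exact absurd h1 hBji
        · exact h2
      rw [hB1, A0, if_neg hnij, if_pos ⟨h, hm⟩]

end Umin

namespace Umin

lemma replicate_eq_symBlock (t : ℕ) : List.replicate t 0 = symBlock 0 t := by
  rw [symBlock_eq]
  simp

end Umin

/-- If the normalized score vector of a feasible score sequence `r` is a
concatenation of symmetric vectors, then there is exactly one tournament
matrix with score sequence `r` having the minimum number of upsets. -/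
theorem uminUnique_of_concatSym (n : ℕ) (r : Fin n → ℤ)
    (hR : IsFeasible n r) (hsym : IsConcatSym (normalized n r)) :
    UminUnique r := by
  classical
  obtain ⟨L, hL, hblocks⟩ := hsym
  have hex : ∀ Bl ∈ L, ∃ q : ℕ × ℕ, Bl = symBlock q.1 q.2 := by
    intro Bl hBl
    rcases hblocks Bl hBl with ⟨t, rfl⟩ | ⟨p, t, _, rfl⟩
    · exact ⟨(0, t), Umin.replicate_eq_symBlock t⟩
    · exact ⟨(p, t), rfl⟩
  choose f hf using hex
  set P : List (ℕ × ℕ) := L.attach.map (fun x => f x.1 x.2) with hPdef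
  have hP : normalized n r = (P.map fun q => symBlock q.1 q.2).flatten := by
    rw [hL]
    congr 1
    rw [hPdef, List.map_map]
    have heq : ((fun q : ℕ×ℕ => symBlock q.1 q.2) ∘ (fun x : {x // x ∈ L} => f x.1 x.2))
        = fun x : {x // x ∈ L} => x.1 := by
      funext x
      exact ((hf x.1 x.2).symm : symBlock (f x.1 x.2).1 (f x.1 x.2).2 = x.1)
    rw [heq]
    exact (List.attach_map_subtype_val L).symm
  have hG := Umin.hGood_of_concat hP
  unfold UminUnique
  refine ⟨Umin.A0 n P, ⟨Umin.A0_tournament, Umin.A0_scores hG, ?_⟩, ?_⟩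
  · intro B hTB hsB
    rw [Umin.A0_upsets hG]
    exact Umin.lower_bound hG hTB hsB
  · rintro B ⟨hTB, hsB, hminB⟩
    have h1 : upsets B ≤ Umin.Lval P := by
      have h := hminB (Umin.A0 n P) Umin.A0_tournament (Umin.A0_scores hG)
      rwa [Umin.A0_upsets hG] at h
    exact Umin.eq_analysis hG hTB hsB (le_antisymm h1 (Umin.lower_bound hG hTB hsB))
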